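/- Let (vᵢ)_{i ∈ ℤ} be a bi-infinite path in the Farey graph 𝓕 (so vᵢ is adjacent to vᵢ₊₁ and vᵢ₋₁ ≠ vᵢ₊₁ for all i). Suppose that for every i ∈ ℤ, the distance between vᵢ₋₁ and vᵢ₊₁ in the induced subgraph of 𝓕 on the neighborhood of vᵢ is at least 3. Then (vᵢ) is a geodesic: for all i, j ∈ ℤ, the distance in 𝓕 between vᵢ and vⱼ equals |i − j|. -/

import Mathlib

/-- Primitive vectors in `ℤ²`. -/
def PrimVec : Type := {v : Fin 2 → ℤ // IsCoprime (v 0) (v 1)}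

/-- Identify a primitive vector with its negation. -/
def fareySetoid : Setoid PrimVec where
  r v w := v.1 = w.1 ∨ v.1 = -w.1
  iseqv := by
    refine ⟨fun v => Or.inl rfl, ?_, ?_⟩
    · rintro v w (h | h)
      · exact Or.inl h.symm
      · exact Or.inr (by rw [h, neg_neg])
    · rintro u v w (h1 | h1) (h2 | h2)
      · exact Or.inl (h1.trans h2)
      · exact Or.inr (by rw [h1, h2])
      · exact Or.inr (by rw [h1, h2])
      · exact Or.inl (by rw [h1, h2, neg_neg])

/-- Vertices of the Farey graph: primitive vectors of `ℤ²` modulo negation. -/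
def FareyVertex : Type := Quotient fareySetoid

def fareyDet (v w : Fin 2 → ℤ) : ℤ := v 0 * w 1 - v 1 * w 0

lemma fareyDet_neg_left (v w : Fin 2 → ℤ) : fareyDet (-v) w = -fareyDet v w := by
  simp [fareyDet]; ring

lemma fareyDet_neg_right (v w : Fin 2 → ℤ) : fareyDet v (-w) = -fareyDet v w := by
  simp [fareyDet]; ring

/-- The Farey graph. -/
def Farey : SimpleGraph FareyVertex where
  Adj := Quotient.lift₂
    (fun v w : PrimVec => fareyDet v.1 w.1 = 1 ∨ fareyDet v.1 w.1 = -1)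
    (by
      rintro a b a' b' (h1 | h1) (h2 | h2) <;>
        simp only [eq_iff_iff] <;>
        rw [h1, h2] <;>
        simp only [fareyDet_neg_left, fareyDet_neg_right, neg_neg] <;>
        omega)
  symm := by
    constructor
    intro a b
    refine Quotient.inductionOn₂ a b ?_
    intro v w h
    have hd : fareyDet w.1 v.1 = -fareyDet v.1 w.1 := by simp [fareyDet]; ring
    show fareyDet w.1 v.1 = 1 ∨ fareyDet w.1 v.1 = -1
    rcases h with h | h <;> omega
  loopless := by
    constructor
    intro a
    refine Quotient.inductionOn a ?_
    intro v h
    have hd : fareyDet v.1 v.1 = 0 := by simp [fareyDet]; ring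
    rcases (h : fareyDet v.1 v.1 = 1 ∨ fareyDet v.1 v.1 = -1) with h | h <;> omega

/-- The Farey vertex of a primitive vector. -/
def fv (v : Fin 2 → ℤ) (h : IsCoprime (v 0) (v 1)) : FareyVertex :=
  Quotient.mk fareySetoid ⟨v, h⟩

namespace FareyThm

/-! ### Basic determinant algebra -/

lemma det_swap (p q : Fin 2 → ℤ) : fareyDet q p = - fareyDet p q := by
  simp [fareyDet]; ring

lemma prim_right {p q : Fin 2 → ℤ} (h : fareyDet p q = 1 ∨ fareyDet p q = -1) :
    IsCoprime (q 0) (q 1) := by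
  rcases h with h | h
  · exact ⟨-(p 1), p 0, by simp only [fareyDet] at h; linarith⟩
  · exact ⟨p 1, -(p 0), by simp only [fareyDet] at h; linarith⟩

lemma prim_parallel {u z : Fin 2 → ℤ} (hu : IsCoprime (u 0) (u 1))
    (hz : IsCoprime (z 0) (z 1)) (h : fareyDet u z = 0) : z = u ∨ z = -u := by
  obtain ⟨a, b, hab⟩ := hu
  obtain ⟨a', b', hab'⟩ := hz
  simp only [fareyDet] at h
  have h0 : z 0 = (a * z 0 + b * z 1) * u 0 := by
    linear_combination (-(z 0)) * hab - b * h
  have h1 : z 1 = (a * z 0 + b * z 1) * u 1 := by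
    linear_combination (-(z 1)) * hab + a * h
  have hcu : (a * z 0 + b * z 1) * (a' * u 0 + b' * u 1) = 1 := by
    linear_combination hab' - a' * h0 - b' * h1
  have hunit : IsUnit (a * z 0 + b * z 1) := IsUnit.of_mul_eq_one _ hcu
  rcases Int.isUnit_iff.mp hunit with hc | hc
  · left
    funext j
    rcases j with ⟨jv, hj⟩
    interval_cases jv
    · show z 0 = u 0; rw [h0, hc, one_mul]
    · show z 1 = u 1; rw [h1, hc, one_mul]
  · right
    funext j
    rcases j with ⟨jv, hj⟩
    interval_cases jv
    · show z 0 = -u 0; rw [h0, hc]; ring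
    · show z 1 = -u 1; rw [h1, hc]; ring

lemma cramer {e f : Fin 2 → ℤ} (hef : fareyDet e f = 1) (u : Fin 2 → ℤ) :
    (u 0 = fareyDet u f * e 0 + fareyDet e u * f 0) ∧
      (u 1 = fareyDet u f * e 1 + fareyDet e u * f 1) := by
  simp only [fareyDet] at hef ⊢
  constructor
  · linear_combination (-(u 0)) * hef
  · linear_combination (-(u 1)) * hef

lemma int_sign_sep {P Q t : ℤ} (h5 : P * Q < 0) (h3 : t = P - Q)
    (h4 : t = 1 ∨ t = -1) : False := by
  have h6 : P ≠ 0 := fun h => by simp [h] at h5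
  have h7 : Q ≠ 0 := fun h => by simp [h] at h5
  have h8 : ¬(0 < P ∧ 0 < Q) := fun ⟨hp, hq⟩ => absurd (mul_pos hp hq) (by omega)
  have h9 : ¬(P < 0 ∧ Q < 0) := fun ⟨hp, hq⟩ => absurd (mul_pos_of_neg_of_neg hp hq) (by omega)
  omega

/-- Two adjacent (unimodular) vectors cannot lie on strictly opposite sides of the
edge spanned by the basis `(e, f)`. -/
lemma crossing {e f u u' : Fin 2 → ℤ} (hef : fareyDet e f = 1)
    (hadj : fareyDet u u' = 1 ∨ fareyDet u u' = -1)
    (hu : 0 < fareyDet u f * fareyDet e u)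
    (hu' : fareyDet u' f * fareyDet e u' < 0) : False := by
  have key : fareyDet u u' =
      fareyDet u f * fareyDet e u' - fareyDet e u * fareyDet u' f := by
    simp only [fareyDet] at *
    linear_combination (-(u 0 * u' 1 - u 1 * u' 0)) * hef
  have h5 : (fareyDet u f * fareyDet e u') * (fareyDet e u * fareyDet u' f) < 0 := by
    have hrw : (fareyDet u f * fareyDet e u') * (fareyDet e u * fareyDet u' f)
        = (fareyDet u f * fareyDet e u) * (fareyDet u' f * fareyDet e u') := by ring
    rw [hrw]
    exact mul_neg_of_pos_of_neg hu hu'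
  exact int_sign_sep h5 key hadj

/-- Growth lemma for three-term recurrences with coefficients of absolute value `≥ 3`. -/
lemma growth (g b : ℕ → ℤ) (hb : ∀ n, 3 ≤ |b n|)
    (hrec : ∀ n, g (n+2) = b n * g (n+1) - g n)
    (h0 : |g 0| ≤ |g 1|) (h1 : 1 ≤ |g 1|) :
    ∀ n : ℕ, (1 + (n : ℤ) ≤ |g (n+1)|) ∧ |g n| ≤ |g (n+1)| := by
  intro n
  induction n with
  | zero => exact ⟨by simpa using h1, h0⟩
  | succ m ih =>
    obtain ⟨ih1, ih2⟩ := ih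
    have habs : |b m| * |g (m+1)| - |g m| ≤ |g (m+2)| := by
      have h' := abs_sub_abs_le_abs_sub (b m * g (m+1)) (g m)
      rw [← hrec m, abs_mul] at h'
      linarith
    have hmul : 3 * |g (m+1)| ≤ |b m| * |g (m+1)| :=
      mul_le_mul_of_nonneg_right (hb m) (abs_nonneg _)
    constructor
    · push_cast; linarith
    · linarith

/-! ### The lifted path data -/

structure Good (w : ℤ → Fin 2 → ℤ) (a : ℤ → ℤ) : Prop where
  hw : ∀ i, fareyDet (w i) (w (i+1)) = 1
  hrec : ∀ i, (w (i+1) 0 = a i * w i 0 - w (i-1) 0) ∧ (w (i+1) 1 = a i * w i 1 - w (i-1) 1)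
  ha : ∀ i, 3 ≤ |a i|
  hprim : ∀ i, IsCoprime (w i 0) (w i 1)

variable {w : ℤ → Fin 2 → ℤ} {a : ℤ → ℤ}

/-- The sign `-sign (a k)`. -/
def tt (a : ℤ → ℤ) (k : ℤ) : ℤ := if 0 < a k then -1 else 1

lemma tt_cases (a : ℤ → ℤ) (k : ℤ) : tt a k = 1 ∨ tt a k = -1 := by
  unfold tt; split_ifs <;> simp

lemma abs_split (H : Good w a) (k : ℤ) : 3 ≤ a k ∨ a k ≤ -3 := by
  have habs := H.ha k
  rcases abs_cases (a k) with ⟨heq, _⟩ | ⟨heq, _⟩ <;> rw [heq] at habs <;> omega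

lemma tA_le (H : Good w a) (k : ℤ) : tt a k * (a k + tt a k) ≤ -2 := by
  rcases abs_split H k with h3 | h3 <;> unfold tt <;> split_ifs with h <;> omega

/-- The second basis vector of the separating edge at index `k`. -/
def yy (w : ℤ → Fin 2 → ℤ) (a : ℤ → ℤ) (k : ℤ) : Fin 2 → ℤ :=
  fun j => -(w (k-1) j) - tt a k * w k j

/-- The side quadratic form at index `k`. -/
def Sf (w : ℤ → Fin 2 → ℤ) (a : ℤ → ℤ) (k : ℤ) (u : Fin 2 → ℤ) : ℤ :=
  fareyDet u (yy w a k) * fareyDet (w k) u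

lemma Sf_neg (k : ℤ) (u : Fin 2 → ℤ) : Sf w a k (-u) = Sf w a k u := by
  simp only [Sf, fareyDet, Pi.neg_apply]; ring

lemma hw' (H : Good w a) (k : ℤ) : fareyDet (w (k-1)) (w k) = 1 := by
  have h := H.hw (k-1); rwa [sub_add_cancel] at h

lemma F1 (H : Good w a) (k : ℤ) : fareyDet (w k) (yy w a k) = 1 := by
  have h := hw' H k
  simp only [fareyDet, yy] at h ⊢
  linear_combination h

lemma F2 (H : Good w a) (k : ℤ) : fareyDet (w (k-1)) (yy w a k) = - tt a k := by
  have h := hw' H k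
  simp only [fareyDet, yy] at h ⊢
  linear_combination (-(tt a k)) * h

lemma detrecL (H : Good w a) (k : ℤ) (u : Fin 2 → ℤ) :
    fareyDet (w (k+1)) u = a k * fareyDet (w k) u - fareyDet (w (k-1)) u := by
  have h0 := (H.hrec k).1
  have h1 := (H.hrec k).2
  simp only [fareyDet]
  linear_combination (u 1) * h0 - (u 0) * h1

lemma detrecR (H : Good w a) (k : ℤ) (u : Fin 2 → ℤ) :
    fareyDet u (w (k+1)) = a k * fareyDet u (w k) - fareyDet u (w (k-1)) := by
  have h0 := (H.hrec k).1
  have h1 := (H.hrec k).2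
  simp only [fareyDet]
  linear_combination (u 0) * h1 - (u 1) * h0

lemma detrecL_down (H : Good w a) (k : ℤ) (u : Fin 2 → ℤ) :
    fareyDet (w (k-1)) u = a k * fareyDet (w k) u - fareyDet (w (k+1)) u := by
  have h := detrecL H k u; linarith

lemma detrecR_down (H : Good w a) (k : ℤ) (u : Fin 2 → ℤ) :
    fareyDet u (w (k-1)) = a k * fareyDet u (w k) - fareyDet u (w (k+1)) := by
  have h := detrecR H k u; linarith

lemma F3 (H : Good w a) (k : ℤ) : fareyDet (w (k+1)) (yy w a k) = a k + tt a k := by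
  rw [detrecL H k, F1 H k, F2 H k]; ring

lemma absA (H : Good w a) (k : ℤ) : 2 ≤ |a k + tt a k| := by
  rcases abs_split H k with h3 | h3 <;> unfold tt <;> split_ifs with h
  · rw [abs_of_nonneg (by omega)]; omega
  · omega
  · omega
  · rw [abs_of_nonpos (by omega)]; omega

/-! ### Growth of the determinant sequences -/

lemma Hhigh (H : Good w a) (k : ℤ) :
    ∀ n : ℕ, 1 + (n : ℤ) ≤ |fareyDet (w (k + 1 + n)) (yy w a k)| := by
  have G := growth (fun n : ℕ => fareyDet (w (k + n)) (yy w a k)) (fun n : ℕ => a (k + n + 1))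
    (fun n => H.ha _) ?_ ?_ ?_
  · intro n
    have h := (G n).1
    push_cast at h ⊢
    rw [show k + ((n:ℤ) + 1) = k + 1 + (n:ℤ) from by ring] at h
    exact h
  · intro n
    have h := detrecL H (k + n + 1) (yy w a k)
    rw [show k + (n:ℤ) + 1 - 1 = k + (n:ℤ) from by ring] at h
    show fareyDet (w (k + ((n:ℕ)+2 : ℕ))) _ = _
    push_cast
    rw [show k + ((n:ℤ)+2) = k + (n:ℤ) + 1 + 1 from by ring,
      show k + ((n:ℤ)+1) = k + (n:ℤ) + 1 from by ring]
    exact h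
  · show |fareyDet (w (k + ((0:ℕ):ℤ))) _| ≤ |fareyDet (w (k + ((1:ℕ):ℤ))) _|
    push_cast
    rw [add_zero, F1 H k]
    have := absA H k
    have hF3 : fareyDet (w (k+1)) (yy w a k) = a k + tt a k := F3 H k
    rw [hF3]
    simp
    omega
  · show 1 ≤ |fareyDet (w (k + ((1:ℕ):ℤ))) _|
    push_cast
    rw [F3 H k]
    have := absA H k
    omega

lemma Hlow (H : Good w a) (k : ℤ) :
    ∀ n : ℕ, 1 + (n : ℤ) ≤ |fareyDet (w (k - 1 - n)) (yy w a k)| := by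
  have G := growth (fun n : ℕ => fareyDet (w (k - n)) (yy w a k)) (fun n : ℕ => a (k - n - 1))
    (fun n => H.ha _) ?_ ?_ ?_
  · intro n
    have h := (G n).1
    push_cast at h ⊢
    rw [show k - ((n:ℤ) + 1) = k - 1 - (n:ℤ) from by ring] at h
    exact h
  · intro n
    have h := detrecL_down H (k - n - 1) (yy w a k)
    rw [show k - (n:ℤ) - 1 - 1 = k - ((n:ℤ) + 2) from by ring,
      show k - (n:ℤ) - 1 + 1 = k - (n:ℤ) from by ring] at h
    show fareyDet (w (k - ((n:ℕ)+2 : ℕ))) _ = _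
    push_cast
    rw [show k - ((n:ℤ)+1) = k - (n:ℤ) - 1 from by ring]
    exact h
  · show |fareyDet (w (k - ((0:ℕ):ℤ))) _| ≤ |fareyDet (w (k - ((1:ℕ):ℤ))) _|
    push_cast
    rw [sub_zero, F1 H k]
    have h2 := F2 H k
    rw [h2]
    rcases tt_cases a k with h | h <;> rw [h] <;> simp
  · show 1 ≤ |fareyDet (w (k - ((1:ℕ):ℤ))) _|
    push_cast
    rw [F2 H k]
    rcases tt_cases a k with h | h <;> rw [h] <;> simp

lemma Dhigh (H : Good w a) (k : ℤ) :
    ∀ n : ℕ, 1 + (n : ℤ) ≤ |fareyDet (w k) (w (k + 1 + n))| := by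
  have G := growth (fun n : ℕ => fareyDet (w k) (w (k + n))) (fun n : ℕ => a (k + n + 1))
    (fun n => H.ha _) ?_ ?_ ?_
  · intro n
    have h := (G n).1
    push_cast at h ⊢
    rw [show k + ((n:ℤ) + 1) = k + 1 + (n:ℤ) from by ring] at h
    exact h
  · intro n
    have h := detrecR H (k + n + 1) (w k)
    rw [show k + (n:ℤ) + 1 - 1 = k + (n:ℤ) from by ring] at h
    show fareyDet _ (w (k + ((n:ℕ)+2 : ℕ))) = _
    push_cast
    rw [show k + ((n:ℤ)+2) = k + (n:ℤ) + 1 + 1 from by ring,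
      show k + ((n:ℤ)+1) = k + (n:ℤ) + 1 from by ring]
    exact h
  · show |fareyDet (w k) (w (k + ((0:ℕ):ℤ)))| ≤ |fareyDet (w k) (w (k + ((1:ℕ):ℤ)))|
    push_cast
    rw [add_zero]
    have hself : fareyDet (w k) (w k) = 0 := by simp [fareyDet]; ring
    rw [hself, H.hw k]
    simp
  · show 1 ≤ |fareyDet (w k) (w (k + ((1:ℕ):ℤ)))|
    push_cast
    rw [H.hw k]
    simp

lemma Dlow (H : Good w a) (k : ℤ) :
    ∀ n : ℕ, 1 + (n : ℤ) ≤ |fareyDet (w k) (w (k - 1 - n))| := by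
  have G := growth (fun n : ℕ => fareyDet (w k) (w (k - n))) (fun n : ℕ => a (k - n - 1))
    (fun n => H.ha _) ?_ ?_ ?_
  · intro n
    have h := (G n).1
    push_cast at h ⊢
    rw [show k - ((n:ℤ) + 1) = k - 1 - (n:ℤ) from by ring] at h
    exact h
  · intro n
    have h := detrecR_down H (k - n - 1) (w k)
    rw [show k - (n:ℤ) - 1 - 1 = k - ((n:ℤ) + 2) from by ring,
      show k - (n:ℤ) - 1 + 1 = k - (n:ℤ) from by ring] at h
    show fareyDet _ (w (k - ((n:ℕ)+2 : ℕ))) = _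
    push_cast
    rw [show k - ((n:ℤ)+1) = k - (n:ℤ) - 1 from by ring]
    exact h
  · show |fareyDet (w k) (w (k - ((0:ℕ):ℤ)))| ≤ |fareyDet (w k) (w (k - ((1:ℕ):ℤ)))|
    push_cast
    rw [sub_zero]
    have hself : fareyDet (w k) (w k) = 0 := by simp [fareyDet]; ring
    have hsw : fareyDet (w k) (w (k-1)) = -1 := by
      rw [det_swap]; rw [hw' H k]
    rw [hself, hsw]
    simp
  · show 1 ≤ |fareyDet (w k) (w (k - ((1:ℕ):ℤ)))|
    push_cast
    have hsw : fareyDet (w k) (w (k-1)) = -1 := by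
      rw [det_swap]; rw [hw' H k]
    rw [hsw]
    simp

/-! ### Values of the side form along the path, and sign propagation -/

lemma Sval_low (H : Good w a) (k : ℤ) : Sf w a k (w (k-1)) = tt a k := by
  unfold Sf
  rw [F2 H k, show fareyDet (w k) (w (k-1)) = -1 from by rw [det_swap, hw' H k]]
  ring

lemma Sval_high (H : Good w a) (k : ℤ) : Sf w a k (w (k+1)) = a k + tt a k := by
  unfold Sf
  rw [F3 H k, H.hw k]
  ring

lemma tt_sq (a : ℤ → ℤ) (k : ℤ) : tt a k * tt a k = 1 := by
  rcases tt_cases a k with h | h <;> rw [h] <;> ring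

lemma yy_succ (k : ℤ) (j : Fin 2) :
    yy w a (k+1) j = -(w k j) - tt a (k+1) * w (k+1) j := by
  simp only [yy, add_sub_cancel_right]

lemma Sval_y (H : Good w a) (k : ℤ) :
    Sf w a k (yy w a (k+1)) = (a k + tt a k) + tt a (k+1) := by
  have d2 : fareyDet (w k) (yy w a (k+1)) = - tt a (k+1) := by
    have h := H.hw k
    simp only [fareyDet] at h ⊢
    rw [yy_succ, yy_succ]
    linear_combination (-(tt a (k+1))) * h
  have hF1 := F1 H k
  have hF3 := F3 H k
  have d1 : fareyDet (yy w a (k+1)) (yy w a k) =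
      -1 - tt a (k+1) * (a k + tt a k) := by
    simp only [fareyDet] at hF1 hF3 ⊢
    rw [yy_succ, yy_succ]
    linear_combination (-1 : ℤ) * hF1 - (tt a (k+1)) * hF3
  have hsq := tt_sq a (k+1)
  unfold Sf
  rw [d1, d2]
  linear_combination (a k + tt a k) * hsq

/-- nonvanishing of the side form on the path -/
lemma S_ne_low (H : Good w a) (k : ℤ) (n : ℕ) : Sf w a k (w (k-1-n)) ≠ 0 := by
  have h1 := Hlow H k n
  have h2 := Dlow H k n
  have f1 : fareyDet (w (k-1-n)) (yy w a k) ≠ 0 := by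
    intro h; rw [h] at h1; simp at h1; omega
  have f2 : fareyDet (w k) (w (k-1-n)) ≠ 0 := by
    intro h; rw [h] at h2; simp at h2; omega
  exact mul_ne_zero f1 f2

lemma S_ne_high (H : Good w a) (k : ℤ) (n : ℕ) : Sf w a k (w (k+1+n)) ≠ 0 := by
  have h1 := Hhigh H k n
  have h2 := Dhigh H k n
  have f1 : fareyDet (w (k+1+n)) (yy w a k) ≠ 0 := by
    intro h; rw [h] at h1; simp at h1; omega
  have f2 : fareyDet (w k) (w (k+1+n)) ≠ 0 := by
    intro h; rw [h] at h2; simp at h2; omega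
  exact mul_ne_zero f1 f2

/-- crossing lemma specialized to the side form -/
lemma crossingS (H : Good w a) (k : ℤ) {u u' : Fin 2 → ℤ}
    (hadj : fareyDet u u' = 1 ∨ fareyDet u u' = -1)
    (hu : 0 < Sf w a k u) (hu' : Sf w a k u' < 0) : False := by
  exact crossing (F1 H k) hadj (by unfold Sf at hu; exact hu) (by unfold Sf at hu'; exact hu')

lemma chain_low (H : Good w a) (k : ℤ) :
    ∀ n : ℕ, 0 < tt a k * Sf w a k (w (k-1-n)) := by
  intro n
  induction n with
  | zero =>
    show 0 < tt a k * Sf w a k (w (k-1-((0:ℕ):ℤ)))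
    push_cast
    rw [sub_zero, Sval_low H k, tt_sq]
    norm_num
  | succ n ih =>
    have hne : Sf w a k (w (k-1-((n+1 : ℕ):ℤ))) ≠ 0 := S_ne_low H k (n+1)
    have hadj : fareyDet (w (k-1-((n+1:ℕ):ℤ))) (w (k-1-((n:ℕ):ℤ))) = 1 := by
      have h := H.hw (k-2-(n:ℤ))
      rw [show k-2-(n:ℤ)+1 = k-1-((n:ℕ):ℤ) from by ring] at h
      rw [show (k-1-((n+1:ℕ):ℤ)) = k-2-(n:ℤ) from by push_cast; ring]
      exact h
    by_contra hcon
    push_neg at hcon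
    rcases tt_cases a k with h | h
    · rw [h, one_mul] at ih hcon
      have hlt : Sf w a k (w (k-1-((n+1:ℕ):ℤ))) < 0 := lt_of_le_of_ne hcon hne
      exact crossingS H k (Or.inr (by rw [det_swap, hadj])) ih hlt
    · rw [h, neg_one_mul] at ih hcon
      have ih' : Sf w a k (w (k-1-((n:ℕ):ℤ))) < 0 := by linarith
      have hcon' : 0 < Sf w a k (w (k-1-((n+1:ℕ):ℤ))) := by
        rcases hne.lt_or_gt with hl | hl
        · linarith
        · exact hl
      exact crossingS H k (Or.inl hadj) hcon' ih'

lemma chain_high (H : Good w a) (k : ℤ) :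
    ∀ n : ℕ, tt a k * Sf w a k (w (k+1+n)) < 0 := by
  intro n
  induction n with
  | zero =>
    show tt a k * Sf w a k (w (k+1+((0:ℕ):ℤ))) < 0
    push_cast
    rw [add_zero, Sval_high H k]
    have := tA_le H k
    omega
  | succ n ih =>
    have hne : Sf w a k (w (k+1+((n+1 : ℕ):ℤ))) ≠ 0 := S_ne_high H k (n+1)
    have hadj : fareyDet (w (k+1+((n:ℕ):ℤ))) (w (k+1+((n+1:ℕ):ℤ))) = 1 := by
      have h := H.hw (k+1+(n:ℤ))
      rw [show k+1+(n:ℤ)+1 = k+1+((n+1:ℕ):ℤ) from by push_cast; ring] at h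
      exact h
    by_contra hcon
    push_neg at hcon
    rcases tt_cases a k with h | h
    · rw [h, one_mul] at ih hcon
      have hgt : 0 < Sf w a k (w (k+1+((n+1:ℕ):ℤ))) := by
        rcases hne.lt_or_gt with hl | hl
        · linarith
        · exact hl
      exact crossingS H k (Or.inr (by rw [det_swap, hadj])) hgt ih
    · rw [h, neg_one_mul] at ih hcon
      have ih' : 0 < Sf w a k (w (k+1+((n:ℕ):ℤ))) := by linarith
      have hlt : Sf w a k (w (k+1+((n+1:ℕ):ℤ))) < 0 := by
        rcases hne.lt_or_gt with hl | hl
        · exact hl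
        · linarith
      exact crossingS H k (Or.inl hadj) ih' hlt

/-! ### The side form on Farey vertices -/

def SVf (w : ℤ → Fin 2 → ℤ) (a : ℤ → ℤ) (k : ℤ) : FareyVertex → ℤ :=
  Quotient.lift (fun p : PrimVec => Sf w a k p.1)
    (by
      intro p q hpq
      have h : p.1 = q.1 ∨ p.1 = -q.1 := hpq
      show Sf w a k p.1 = Sf w a k q.1
      rcases h with h | h
      · rw [h]
      · rw [h]; exact Sf_neg k q.1)

lemma SV_mk (k : ℤ) (u : Fin 2 → ℤ) (h : IsCoprime (u 0) (u 1)) :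
    SVf w a k (fv u h) = Sf w a k u := rfl

lemma adj_out {x y : FareyVertex} (h : Farey.Adj x y) :
    fareyDet (x.out).1 (y.out).1 = 1 ∨ fareyDet (x.out).1 (y.out).1 = -1 := by
  rw [← Quotient.out_eq x, ← Quotient.out_eq y] at h
  exact h

lemma SV_out (k : ℤ) (x : FareyVertex) : SVf w a k x = Sf w a k (x.out).1 := by
  conv_lhs => rw [← Quotient.out_eq x]
  rfl

lemma crossingV (H : Good w a) (k : ℤ) {x y : FareyVertex} (hadj : Farey.Adj x y)
    (hx : 0 < SVf w a k x) (hy : SVf w a k y < 0) : False := by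
  rw [SV_out] at hx hy
  exact crossingS H k (adj_out hadj) hx hy

lemma boundaryV (H : Good w a) (k : ℤ) {x : FareyVertex}
    (h : SVf w a (k+1) x = 0) : tt a k * SVf w a k x < 0 := by
  rw [SV_out] at h ⊢
  have hprimx : IsCoprime ((x.out).1 0) ((x.out).1 1) := (x.out).2
  have htA := tA_le H k
  have hts : tt a k * tt a (k+1) ≤ 1 := by
    rcases tt_cases a k with h1 | h1 <;> rcases tt_cases a (k+1) with h2 | h2 <;>
      rw [h1, h2] <;> norm_num
  have hexp : tt a k * ((a k + tt a k) + tt a (k+1))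
      = tt a k * (a k + tt a k) + tt a k * tt a (k+1) := by ring
  unfold Sf at h
  rcases mul_eq_zero.mp h with h0 | h0
  · have hyprim : IsCoprime (yy w a (k+1) 0) (yy w a (k+1) 1) :=
      prim_right (Or.inl (F1 H (k+1)))
    rcases prim_parallel hprimx hyprim h0 with he | he
    · rw [← he, Sval_y H k, hexp]; linarith
    · have he' : (x.out).1 = -(yy w a (k+1)) := by rw [he, neg_neg]
      rw [he', Sf_neg, Sval_y H k, hexp]; linarith
  · rcases prim_parallel (H.hprim (k+1)) hprimx h0 with he | he
    · rw [he, Sval_high H k]; linarith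
    · rw [he, Sf_neg, Sval_high H k]; linarith

/-! ### Core: every walk from `⟦w 0⟧` to `⟦w n⟧` has length at least `n` -/

lemma core (H : Good w a) (n : ℕ) {x y : FareyVertex}
    (hx : x = fv (w 0) (H.hprim 0)) (hy : y = fv (w n) (H.hprim n))
    (p : Farey.Walk x y) : n ≤ p.length := by
  classical
  subst hx hy
  cases n with
  | zero => exact Nat.zero_le _
  | succ nn =>
    by_contra hcon
    push_neg at hcon
    set m := p.length with hm
    clear_value m
    have hg0 : p.getVert 0 = fv (w 0) (H.hprim 0) := p.getVert_zero
    have hgm : p.getVert m = fv (w ((nn:ℕ)+1 : ℕ)) (H.hprim _) := by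
      rw [hm]; exact p.getVert_length
    have hadjg : ∀ i, i < m → Farey.Adj (p.getVert i) (p.getVert (i+1)) :=
      fun i hi => p.adj_getVert_succ (by omega)
    have hNear0 : ∀ k : ℤ, 1 ≤ k → 0 < tt a k * SVf w a k (p.getVert 0) := by
      intro k hk
      rw [hg0, SV_mk]
      have h := chain_low H k (k-1).toNat
      rwa [show k - 1 - ((k-1).toNat : ℤ) = 0 from by omega] at h
    have hNearm : ∀ k : ℤ, k ≤ (nn:ℤ) → tt a k * SVf w a k (p.getVert m) < 0 := by
      intro k hk
      rw [hgm, SV_mk]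
      have h := chain_high H k (((nn:ℤ) - k).toNat)
      rwa [show k + 1 + (((nn:ℤ)-k).toNat : ℤ) = (((nn:ℕ)+1 : ℕ) : ℤ) from by
        push_cast; omega] at h
    have exit : ∀ k : ℕ, 1 ≤ k → k ≤ nn → ∃ i, i ≤ m ∧ 1 ≤ i ∧
        SVf w a (k:ℤ) (p.getVert i) = 0 ∧
        ∀ j, j < i → 0 < tt a (k:ℤ) * SVf w a (k:ℤ) (p.getVert j) := by
      intro k hk1 hk2
      have hex : ∃ i, i ≤ m ∧ ¬ (0 < tt a (k:ℤ) * SVf w a (k:ℤ) (p.getVert i)) :=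
        ⟨m, le_rfl, by
          have := hNearm (k:ℤ) (by exact_mod_cast hk2)
          linarith⟩
      have hspec := Nat.find_spec hex
      set i0 := Nat.find hex with hi0
      have hmin : ∀ j, j < i0 → 0 < tt a (k:ℤ) * SVf w a (k:ℤ) (p.getVert j) := by
        intro j hj
        have hh := Nat.find_min hex hj
        push_neg at hh
        exact hh (by omega)
      have h1i : 1 ≤ i0 := by
        rcases Nat.eq_zero_or_pos i0 with h0 | h0
        · exfalso
          have h2 := hspec.2
          rw [h0] at h2
          exact h2 (hNear0 (k:ℤ) (by exact_mod_cast hk1))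
        · exact h0
      have hSzero : SVf w a (k:ℤ) (p.getVert i0) = 0 := by
        have hNb : 0 < tt a (k:ℤ) * SVf w a (k:ℤ) (p.getVert (i0 - 1)) := hmin _ (by omega)
        have hadj : Farey.Adj (p.getVert (i0-1)) (p.getVert i0) := by
          have h := hadjg (i0-1) (by omega)
          rwa [show i0 - 1 + 1 = i0 from by omega] at h
        by_contra hne
        have hle := hspec.2
        rcases tt_cases a (k:ℤ) with ht | ht
        · rw [ht, one_mul] at hNb hle
          have hlt : SVf w a (k:ℤ) (p.getVert i0) < 0 := by
            rcases lt_trichotomy (SVf w a (k:ℤ) (p.getVert i0)) 0 with h|h|h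
            · exact h
            · exact absurd h hne
            · exact absurd h hle
          exact crossingV H (k:ℤ) hadj hNb hlt
        · rw [ht, neg_one_mul] at hNb hle
          have hneg : SVf w a (k:ℤ) (p.getVert (i0-1)) < 0 := by linarith
          have hpos : 0 < SVf w a (k:ℤ) (p.getVert i0) := by
            rcases lt_trichotomy (SVf w a (k:ℤ) (p.getVert i0)) 0 with h|h|h
            · exfalso; apply hle; linarith
            · exact absurd h hne
            · exact h
          exact crossingV H (k:ℤ) hadj.symm hpos hneg
      exact ⟨i0, hspec.1, h1i, hSzero, hmin⟩
    have mono : ∀ k : ℕ, 1 ≤ k → k ≤ nn → ∃ i, i ≤ m ∧ k ≤ i ∧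
        SVf w a (k:ℤ) (p.getVert i) = 0 ∧
        ∀ j, j < i → 0 < tt a (k:ℤ) * SVf w a (k:ℤ) (p.getVert j) := by
      intro k
      induction k with
      | zero => intro h1 _; exact absurd h1 (by omega)
      | succ k ih =>
        intro h1 h2
        rcases Nat.eq_zero_or_pos k with hk0 | hk0
        · subst hk0
          obtain ⟨i, him, h1i, hS, hmn⟩ := exit 1 le_rfl h2
          exact ⟨i, him, h1i, hS, hmn⟩
        · obtain ⟨i, him, hki, hS, hminp⟩ := ih hk0 (by omega)
          obtain ⟨i', him', h1i', hS', hmin'⟩ := exit (k+1) (by omega) h2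
          have hb : tt a (k:ℤ) * SVf w a (k:ℤ) (p.getVert i') < 0 := by
            apply boundaryV H (k:ℤ)
            rw [show ((k:ℤ)+1) = ((k+1:ℕ):ℤ) from by push_cast; ring]
            exact hS'
          have hne' : i' ≠ i := by
            intro he; rw [he, hS] at hb; simp at hb
          have hge : ¬ i' < i := fun hlt => by
            have := hminp i' hlt; linarith
          exact ⟨i', him', by omega, hS', hmin'⟩
    rcases Nat.eq_zero_or_pos nn with hnn | hnn
    · subst hnn
      have hm0 : m = 0 := by omega
      rw [hm0] at hgm
      have heq := hg0.symm.trans hgm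
      have hrel : w 0 = w (((0:ℕ)+1 : ℕ) : ℤ) ∨ w 0 = -(w (((0:ℕ)+1 : ℕ) : ℤ)) :=
        Quotient.exact heq
      have hc : (((0:ℕ)+1 : ℕ) : ℤ) = 1 := by norm_num
      rw [hc] at hrel
      have hdet := H.hw 0
      rw [zero_add] at hdet
      rcases hrel with h | h
      · rw [h] at hdet
        have h0 : fareyDet (w 1) (w 1) = 0 := by unfold fareyDet; ring
        omega
      · rw [h] at hdet
        have h0 : fareyDet (-(w 1)) (w 1) = 0 := by
          unfold fareyDet; simp only [Pi.neg_apply]; ring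
        omega
    · obtain ⟨i, him, hni, hS, _⟩ := mono nn hnn le_rfl
      have hnem : SVf w a (nn:ℤ) (p.getVert m) ≠ 0 := by
        have h := hNearm (nn:ℤ) le_rfl
        intro h0; rw [h0] at h; simp at h
      have him : i ≠ m := fun he => hnem (he ▸ hS)
      omega

/-! ### Lifting a path of Farey vertices to vectors with determinant one -/

lemma sign_cocycle (δ : ℤ → ℤ) (hδ : ∀ i, δ i = 1 ∨ δ i = -1) :
    ∃ E : ℤ → ℤ, (∀ i, E i = 1 ∨ E i = -1) ∧ (∀ i, E i * E (i + 1) * δ i = 1) := by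
  classical
  let Ep : ℕ → ℤ := fun n => Nat.rec 1 (fun n acc => acc * δ (Int.ofNat n)) n
  let En : ℕ → ℤ := fun n => Nat.rec 1 (fun n acc => acc * δ (Int.negSucc n)) n
  have hEp1 : ∀ n, Ep n = 1 ∨ Ep n = -1 := by
    intro n
    induction n with
    | zero => left; rfl
    | succ n ih =>
      have hstep : Ep (n+1) = Ep n * δ (Int.ofNat n) := rfl
      rcases ih with h | h <;> rcases hδ (Int.ofNat n) with h2 | h2 <;>
        rw [hstep, h, h2] <;> norm_num
  have hEn1 : ∀ n, En n = 1 ∨ En n = -1 := by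
    intro n
    induction n with
    | zero => left; rfl
    | succ n ih =>
      have hstep : En (n+1) = En n * δ (Int.negSucc n) := rfl
      rcases ih with h | h <;> rcases hδ (Int.negSucc n) with h2 | h2 <;>
        rw [hstep, h, h2] <;> norm_num
  refine ⟨fun i => Int.rec (fun n => Ep n) (fun n => En (n+1)) i, ?_, ?_⟩
  · intro i
    cases i with
    | ofNat n => exact hEp1 n
    | negSucc n => exact hEn1 (n+1)
  · intro i
    cases i with
    | ofNat n =>
      have h1 : (Int.ofNat n) + 1 = Int.ofNat (n+1) := rfl
      rw [h1]
      show Ep n * Ep (n+1) * δ (Int.ofNat n) = 1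
      have hstep : Ep (n+1) = Ep n * δ (Int.ofNat n) := rfl
      rw [hstep]
      rcases hEp1 n with h | h <;> rcases hδ (Int.ofNat n) with h2 | h2 <;>
        rw [h, h2] <;> norm_num
    | negSucc n =>
      cases n with
      | zero =>
        have h1 : (Int.negSucc 0) + 1 = Int.ofNat 0 := rfl
        rw [h1]
        show En 1 * Ep 0 * δ (Int.negSucc 0) = 1
        have hstep : En 1 = En 0 * δ (Int.negSucc 0) := rfl
        rw [hstep]
        rcases hδ (Int.negSucc 0) with h2 | h2 <;> rw [h2] <;> norm_num
        <;> rfl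
      | succ n =>
        have h1 : (Int.negSucc (n+1)) + 1 = Int.negSucc n := rfl
        rw [h1]
        show En (n+2) * En (n+1) * δ (Int.negSucc (n+1)) = 1
        have hstep : En (n+2) = En (n+1) * δ (Int.negSucc (n+1)) := rfl
        rw [hstep]
        rcases hEn1 (n+1) with h | h <;> rcases hδ (Int.negSucc (n+1)) with h2 | h2 <;>
          rw [h, h2] <;> norm_num

lemma exists_lift (v : ℤ → FareyVertex) (hadj : ∀ i, Farey.Adj (v i) (v (i+1))) :
    ∃ w : ℤ → Fin 2 → ℤ,
      (∀ i, w i = ((v i).out : PrimVec).1 ∨ w i = -((v i).out : PrimVec).1) ∧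
      (∀ i, fareyDet (w i) (w (i+1)) = 1) := by
  classical
  have hδ : ∀ i, fareyDet ((v i).out : PrimVec).1 ((v (i+1)).out : PrimVec).1 = 1 ∨
      fareyDet ((v i).out : PrimVec).1 ((v (i+1)).out : PrimVec).1 = -1 := by
    intro i
    have h := hadj i
    rw [← Quotient.out_eq (v i), ← Quotient.out_eq (v (i+1))] at h
    exact h
  obtain ⟨E, hE1, hE2⟩ := sign_cocycle
    (fun i => fareyDet ((v i).out : PrimVec).1 ((v (i+1)).out : PrimVec).1) hδ
  refine ⟨fun i => fun j => E i * ((v i).out : PrimVec).1 j, ?_, ?_⟩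
  · intro i
    rcases hE1 i with h | h
    · left; funext j; show E i * _ = _; rw [h, one_mul]
    · right; funext j; show E i * _ = _; rw [h]; simp
  · intro i
    have h := hE2 i
    simp only [fareyDet] at h ⊢
    show E i * _ * (E (i+1) * _) - E i * _ * (E (i+1) * _) = 1
    linear_combination h

/-! ### Upper bound and assembly -/

lemma fv_congr {u u' : Fin 2 → ℤ} {h : IsCoprime (u 0) (u 1)} {h' : IsCoprime (u' 0) (u' 1)}
    (e : u = u') : fv u h = fv u' h' := by subst e; rfl

lemma walk_exists (v : ℤ → FareyVertex) (hadj : ∀ i, Farey.Adj (v i) (v (i+1))) :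
    ∀ (n : ℕ) (i : ℤ), ∃ p : Farey.Walk (v i) (v (i + n)), p.length = n := by
  intro n
  induction n with
  | zero =>
    intro i
    refine ⟨SimpleGraph.Walk.nil.copy rfl (congrArg v (by norm_num)), ?_⟩
    simp
  | succ n ih =>
    intro i
    obtain ⟨p, hp⟩ := ih i
    refine ⟨(p.concat (hadj (i + n))).copy rfl (congrArg v (by push_cast; ring)), ?_⟩
    rw [SimpleGraph.Walk.length_copy, SimpleGraph.Walk.length_concat, hp]

end FareyThm

open FareyThm

theorem farey_geodesic_of_turning_ge_three (v : ℤ → FareyVertex)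
    (hadj : ∀ i : ℤ, Farey.Adj (v i) (v (i + 1)))
    (hne : ∀ i : ℤ, v (i - 1) ≠ v (i + 1))
    (hturn : ∀ i : ℤ, ∀ h₁ : v (i - 1) ∈ Farey.neighborSet (v i),
      ∀ h₂ : v (i + 1) ∈ Farey.neighborSet (v i),
      3 ≤ (Farey.induce (Farey.neighborSet (v i))).dist ⟨v (i - 1), h₁⟩ ⟨v (i + 1), h₂⟩) :
    ∀ i j : ℤ, Farey.dist (v i) (v j) = (i - j).natAbs := by
  classical
  obtain ⟨w, hwrel, hwdet⟩ := exists_lift v hadj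
  have hprim : ∀ i, IsCoprime (w i 0) (w i 1) := by
    intro i
    rcases hwrel i with h | h
    · rw [h]; exact ((v i).out).2
    · rw [h]; simp only [Pi.neg_apply]
      exact (((v i).out).2.neg_left).neg_right
  have hveq : ∀ i (h : IsCoprime (w i 0) (w i 1)), fv (w i) h = v i := by
    intro i h
    rw [← Quotient.out_eq (v i)]
    apply Quotient.sound
    exact hwrel i
  set a : ℤ → ℤ := fun i => fareyDet (w (i-1)) (w (i+1)) with ha_def
  have hwd' : ∀ i, fareyDet (w (i-1)) (w i) = 1 := by
    intro i
    have h := hwdet (i-1); rwa [sub_add_cancel] at h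
  have hrec : ∀ i, (w (i+1) 0 = a i * w i 0 - w (i-1) 0) ∧
      (w (i+1) 1 = a i * w i 1 - w (i-1) 1) := by
    intro i
    have hc := cramer (hwd' i) (w (i+1))
    have hsw : fareyDet (w (i+1)) (w i) = -1 := by rw [det_swap, hwdet i]
    rw [hsw] at hc
    constructor
    · simp only [ha_def]; linarith [hc.1]
    · simp only [ha_def]; linarith [hc.2]
  have habs : ∀ i, 3 ≤ |a i| := by
    intro i
    by_contra hlt
    push_neg at hlt
    have hb : -2 ≤ a i ∧ a i ≤ 2 := abs_le.mp (by linarith)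
    have h₁ : v (i-1) ∈ Farey.neighborSet (v i) := by
      rw [SimpleGraph.mem_neighborSet]
      have h := hadj (i-1); rw [sub_add_cancel] at h; exact h.symm
    have h₂ : v (i+1) ∈ Farey.neighborSet (v i) := by
      rw [SimpleGraph.mem_neighborSet]; exact hadj i
    have h3 := hturn i h₁ h₂
    have hA : a i = fareyDet (w (i-1)) (w (i+1)) := by rw [ha_def]
    have hd : fareyDet (w (i-1)) (w i) = 1 := hwd' i
    rcases (by omega : a i = 0 ∨ a i = 1 ∨ a i = -1 ∨ a i = 2 ∨ a i = -2)
      with h0 | h0 | h0 | h0 | h0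
    · -- a i = 0 : contradicts hne
      have hpar := prim_parallel (hprim (i-1)) (hprim (i+1)) (by rw [← hA, h0])
      apply hne i
      rw [← hveq (i-1) (hprim (i-1)), ← hveq (i+1) (hprim (i+1))]
      apply Quotient.sound
      rcases hpar with h | h
      · exact Or.inl (show w (i-1) = w (i+1) from h.symm)
      · exact Or.inr (show w (i-1) = -(w (i+1)) by rw [h, neg_neg])
    · -- a i = 1
      have hadj13 : Farey.Adj (v (i-1)) (v (i+1)) := by
        rw [← hveq (i-1) (hprim (i-1)), ← hveq (i+1) (hprim (i+1))]
        exact Or.inl (by rw [← hA, h0])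
      have hW : (Farey.induce (Farey.neighborSet (v i))).Adj ⟨v (i-1), h₁⟩ ⟨v (i+1), h₂⟩ := by
        simp only [SimpleGraph.comap_adj, Function.Embedding.coe_subtype]
        exact hadj13
      have hdd := SimpleGraph.dist_le (SimpleGraph.Walk.cons hW SimpleGraph.Walk.nil)
      simp at hdd
      omega
    · -- a i = -1
      have hadj13 : Farey.Adj (v (i-1)) (v (i+1)) := by
        rw [← hveq (i-1) (hprim (i-1)), ← hveq (i+1) (hprim (i+1))]
        exact Or.inr (by rw [← hA, h0])
      have hW : (Farey.induce (Farey.neighborSet (v i))).Adj ⟨v (i-1), h₁⟩ ⟨v (i+1), h₂⟩ := by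
        simp only [SimpleGraph.comap_adj, Function.Embedding.coe_subtype]
        exact hadj13
      have hdd := SimpleGraph.dist_le (SimpleGraph.Walk.cons hW SimpleGraph.Walk.nil)
      simp at hdd
      omega
    · -- a i = 2
      have hr0 := (hrec i).1
      have hr1 := (hrec i).2
      rw [h0] at hr0 hr1
      set z : Fin 2 → ℤ := fun j => w i j - w (i-1) j with hz_def
      have hd' : w (i-1) 0 * w i 1 - w (i-1) 1 * w i 0 = 1 := hd
      have dz1 : fareyDet (w i) z = 1 := by
        simp only [fareyDet, hz_def]; linear_combination hd'
      have dz2 : fareyDet (w (i-1)) z = 1 := by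
        simp only [fareyDet, hz_def]; linear_combination hd'
      have dz3 : fareyDet z (w (i+1)) = -1 := by
        simp only [fareyDet, hz_def, hr0, hr1]; linear_combination (-1 : ℤ) * hd'
      have zprim : IsCoprime (z 0) (z 1) := prim_right (Or.inl dz1)
      have hzmem : fv z zprim ∈ Farey.neighborSet (v i) := by
        rw [SimpleGraph.mem_neighborSet, ← hveq i (hprim i)]
        exact Or.inl dz1
      have hadjz1 : Farey.Adj (v (i-1)) (fv z zprim) := by
        rw [← hveq (i-1) (hprim (i-1))]
        exact Or.inl dz2
      have hadjz2 : Farey.Adj (fv z zprim) (v (i+1)) := by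
        rw [← hveq (i+1) (hprim (i+1))]
        exact Or.inr dz3
      have hW1 : (Farey.induce (Farey.neighborSet (v i))).Adj ⟨v (i-1), h₁⟩ ⟨fv z zprim, hzmem⟩ := by
        simp only [SimpleGraph.comap_adj, Function.Embedding.coe_subtype]
        exact hadjz1
      have hW2 : (Farey.induce (Farey.neighborSet (v i))).Adj ⟨fv z zprim, hzmem⟩ ⟨v (i+1), h₂⟩ := by
        simp only [SimpleGraph.comap_adj, Function.Embedding.coe_subtype]
        exact hadjz2
      have hdd := SimpleGraph.dist_le
        (SimpleGraph.Walk.cons hW1 (SimpleGraph.Walk.cons hW2 SimpleGraph.Walk.nil))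
      simp at hdd
      omega
    · -- a i = -2
      have hr0 := (hrec i).1
      have hr1 := (hrec i).2
      rw [h0] at hr0 hr1
      set z : Fin 2 → ℤ := fun j => -(w i j) - w (i-1) j with hz_def
      have hd' : w (i-1) 0 * w i 1 - w (i-1) 1 * w i 0 = 1 := hd
      have dz1 : fareyDet (w i) z = 1 := by
        simp only [fareyDet, hz_def]; linear_combination hd'
      have dz2 : fareyDet (w (i-1)) z = -1 := by
        simp only [fareyDet, hz_def]; linear_combination (-1 : ℤ) * hd'
      have dz3 : fareyDet z (w (i+1)) = 1 := by
        simp only [fareyDet, hz_def, hr0, hr1]; linear_combination hd'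
      have zprim : IsCoprime (z 0) (z 1) := prim_right (Or.inl dz1)
      have hzmem : fv z zprim ∈ Farey.neighborSet (v i) := by
        rw [SimpleGraph.mem_neighborSet, ← hveq i (hprim i)]
        exact Or.inl dz1
      have hadjz1 : Farey.Adj (v (i-1)) (fv z zprim) := by
        rw [← hveq (i-1) (hprim (i-1))]
        exact Or.inr dz2
      have hadjz2 : Farey.Adj (fv z zprim) (v (i+1)) := by
        rw [← hveq (i+1) (hprim (i+1))]
        exact Or.inl dz3
      have hW1 : (Farey.induce (Farey.neighborSet (v i))).Adj ⟨v (i-1), h₁⟩ ⟨fv z zprim, hzmem⟩ := by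
        simp only [SimpleGraph.comap_adj, Function.Embedding.coe_subtype]
        exact hadjz1
      have hW2 : (Farey.induce (Farey.neighborSet (v i))).Adj ⟨fv z zprim, hzmem⟩ ⟨v (i+1), h₂⟩ := by
        simp only [SimpleGraph.comap_adj, Function.Embedding.coe_subtype]
        exact hadjz2
      have hdd := SimpleGraph.dist_le
        (SimpleGraph.Walk.cons hW1 (SimpleGraph.Walk.cons hW2 SimpleGraph.Walk.nil))
      simp at hdd
      omega
  have H : Good w a := ⟨hwdet, hrec, habs, hprim⟩
  have main : ∀ (j : ℤ) (n : ℕ), Farey.dist (v j) (v (j + n)) = n := by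
    intro j n
    obtain ⟨p, hp⟩ := walk_exists v hadj n j
    have hub : Farey.dist (v j) (v (j + n)) ≤ n :=
      le_trans (SimpleGraph.dist_le p) (le_of_eq hp)
    obtain ⟨q, hq⟩ := SimpleGraph.Reachable.exists_walk_length_eq_dist ⟨p⟩
    have H' : Good (fun t => w (j + t)) (fun t => a (j + t)) := by
      refine ⟨?_, ?_, fun t => habs (j+t), fun t => hprim (j+t)⟩
      · intro t
        show fareyDet (w (j + t)) (w (j + (t+1))) = 1
        rw [show j + (t+1) = (j+t)+1 from by ring]
        exact hwdet (j+t)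
      · intro t
        constructor
        · show w (j+(t+1)) 0 = a (j+t) * w (j+t) 0 - w (j+(t-1)) 0
          rw [show j + (t+1) = (j+t)+1 from by ring, show j + (t-1) = (j+t)-1 from by ring]
          exact (hrec (j+t)).1
        · show w (j+(t+1)) 1 = a (j+t) * w (j+t) 1 - w (j+(t-1)) 1
          rw [show j + (t+1) = (j+t)+1 from by ring, show j + (t-1) = (j+t)-1 from by ring]
          exact (hrec (j+t)).2
    have hx : v j = fv ((fun t => w (j + t)) 0) (H'.hprim 0) :=
      (hveq j (hprim j)).symm.trans (fv_congr (congrArg w (add_zero j).symm))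
    have hy : v (j + n) = fv ((fun t => w (j + t)) (n : ℤ)) (H'.hprim (n : ℤ)) :=
      (hveq (j + n) (hprim (j + n))).symm
    have hlb : (n : ℕ) ≤ q.length := core H' n hx hy q
    omega
  intro i j
  rcases le_total j i with h | h
  · have hm := main j (i - j).toNat
    rw [show j + ((i - j).toNat : ℤ) = i from by omega] at hm
    rw [SimpleGraph.dist_comm, hm]
    omega
  · have hm := main i (j - i).toNat
    rw [show i + ((j - i).toNat : ℤ) = j from by omega] at hm
    rw [hm]
    omega
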